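/- Let π be a probability measure supported on [a,b] with 0 < a < b < ∞, and let S_n = X₁ + ⋯ + X_n be the partial sums of i.i.d. variables X_i ∼ π. Fix an integer k ≥ 2 with k(b−a) ≥ b. Define C = kb − S_k and B = S_{k+1} − kb on the event {S_k ≤ kb < S_{k+1}}. Then the support of the law of (C, B) restricted to this event equals 𝒞 = {(u,v) ∈ [0,b]² : a ≤ u+v ≤ b}. -/

import Mathlib

open MeasureTheory ProbabilityTheory

theorem stmt_15 {Ω : Type*} {m : MeasurableSpace Ω} (μ : Measure Ω) [IsProbabilityMeasure μ]
    (a b : ℝ) (ha : 0 < a) (hab : a < b)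
    (π : Measure ℝ) [IsProbabilityMeasure π]
    (hπsupp : {x : ℝ | ∀ U ∈ nhds x, π U ≠ 0} = Set.Icc a b)
    (X : ℕ → Ω → ℝ) (hXm : ∀ n, Measurable (X n))
    (hiid : iIndepFun X μ)
    (hlaw : ∀ n, Measure.map (X n) μ = π)
    (S : ℕ → Ω → ℝ) (hS : ∀ n ω, S n ω = ∑ i ∈ Finset.range n, X i ω)
    (k : ℕ) (hk : 2 ≤ k) (hkb : b ≤ k * (b - a)) :
    {p : ℝ × ℝ | ∀ U ∈ nhds p,
        (Measure.map (fun ω => ((k : ℝ) * b - S k ω, S (k + 1) ω - (k : ℝ) * b))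
          (μ.restrict {ω | S k ω ≤ (k : ℝ) * b ∧ (k : ℝ) * b < S (k + 1) ω})) U ≠ 0}
      = {p : ℝ × ℝ | p.1 ∈ Set.Icc 0 b ∧ p.2 ∈ Set.Icc 0 b ∧
          a ≤ p.1 + p.2 ∧ p.1 + p.2 ≤ b} := by
  have hk0 : (0:ℝ) < k := by
    have : (2:ℝ) ≤ k := by exact_mod_cast hk
    linarith
  have hkne : (k:ℝ) ≠ 0 := ne_of_gt hk0
  -- measurability of S
  have hSm : ∀ n, Measurable (S n) := by
    intro n
    have : S n = fun ω => ∑ i ∈ Finset.range n, X i ω := funext (hS n)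
    rw [this]
    exact Finset.measurable_sum _ fun i _ => hXm i
  have hSsucc : ∀ ω, S (k+1) ω = S k ω + X k ω := by
    intro ω
    rw [hS (k+1) ω, hS k ω, Finset.sum_range_succ]
  -- π vanishes outside [a,b]
  have hπcompl : π (Set.Icc a b)ᶜ = 0 := by
    apply measure_null_of_locally_null
    intro x hx
    have hx' : x ∉ {x : ℝ | ∀ U ∈ nhds x, π U ≠ 0} := by rw [hπsupp]; exact hx
    simp only [Set.mem_setOf_eq] at hx'
    push_neg at hx'
    obtain ⟨V, hV, hV0⟩ := hx'
    exact ⟨V, mem_nhdsWithin_of_mem_nhds hV, hV0⟩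
  -- π is positive on intervals around support points
  have hπpos : ∀ x : ℝ, a ≤ x → x ≤ b → ∀ r : ℝ, 0 < r →
      0 < π (Set.Ioo (x - r) (x + r)) := by
    intro x hxa hxb r hr
    have hx : x ∈ {x : ℝ | ∀ U ∈ nhds x, π U ≠ 0} := by
      rw [hπsupp]; exact ⟨hxa, hxb⟩
    have := hx (Set.Ioo (x - r) (x + r)) (Ioo_mem_nhds (by linarith) (by linarith))
    exact pos_iff_ne_zero.mpr this
  set f : Ω → ℝ × ℝ := fun ω => ((k : ℝ) * b - S k ω, S (k + 1) ω - (k : ℝ) * b) with hfdef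
  set E : Set Ω := {ω | S k ω ≤ (k : ℝ) * b ∧ (k : ℝ) * b < S (k + 1) ω} with hEdef
  have hfm : Measurable f :=
    (measurable_const.sub (hSm k)).prodMk ((hSm (k+1)).sub measurable_const)
  have hmap : ∀ U : Set (ℝ × ℝ), MeasurableSet U →
      (Measure.map f (μ.restrict E)) U = μ (f ⁻¹' U ∩ E) := by
    intro U hU
    rw [Measure.map_apply hfm hU, Measure.restrict_apply (hfm hU)]
  have hkbk : b ≤ (k:ℝ) * b - (k:ℝ) * a := by
    have := hkb; nlinarith
  ext p
  simp only [Set.mem_setOf_eq]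
  constructor
  · -- support ⊆ C
    intro hp
    by_contra hC
    have hclosed : IsClosed {q : ℝ × ℝ | q.1 ∈ Set.Icc 0 b ∧ q.2 ∈ Set.Icc 0 b ∧
        a ≤ q.1 + q.2 ∧ q.1 + q.2 ≤ b} := by
      have heq : {q : ℝ × ℝ | q.1 ∈ Set.Icc 0 b ∧ q.2 ∈ Set.Icc 0 b ∧
          a ≤ q.1 + q.2 ∧ q.1 + q.2 ≤ b}
          = (Prod.fst ⁻¹' Set.Icc 0 b) ∩ (Prod.snd ⁻¹' Set.Icc 0 b) ∩
            ((fun q : ℝ × ℝ => q.1 + q.2) ⁻¹' Set.Icc a b) := by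
        ext q
        simp only [Set.mem_setOf_eq, Set.mem_inter_iff, Set.mem_preimage, Set.mem_Icc]
        tauto
      rw [heq]
      exact ((isClosed_Icc.preimage continuous_fst).inter
        (isClosed_Icc.preimage continuous_snd)).inter
        (isClosed_Icc.preimage (continuous_fst.add continuous_snd))
    have hpV : {q : ℝ × ℝ | q.1 ∈ Set.Icc 0 b ∧ q.2 ∈ Set.Icc 0 b ∧
        a ≤ q.1 + q.2 ∧ q.1 + q.2 ≤ b}ᶜ ∈ nhds p :=
      hclosed.isOpen_compl.mem_nhds hC
    apply hp _ hpV
    rw [hmap _ hclosed.measurableSet.compl]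
    refine le_zero_iff.mp ?_
    have hsub : f ⁻¹' {q : ℝ × ℝ | q.1 ∈ Set.Icc 0 b ∧ q.2 ∈ Set.Icc 0 b ∧
        a ≤ q.1 + q.2 ∧ q.1 + q.2 ≤ b}ᶜ ∩ E ⊆ X k ⁻¹' (Set.Icc a b)ᶜ := by
      rintro ω ⟨hω1, hω2⟩
      simp only [Set.mem_preimage, Set.mem_compl_iff] at hω1 ⊢
      intro hXk
      apply hω1
      obtain ⟨hXa, hXb⟩ := hXk
      obtain ⟨hE1, hE2⟩ := hω2
      have hE2' : (k:ℝ) * b < S k ω + X k ω := by rw [← hSsucc]; exact hE2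
      simp only [hfdef, Set.mem_setOf_eq, Set.mem_Icc]
      refine ⟨⟨by linarith, by linarith⟩, ⟨?_, ?_⟩, ?_, ?_⟩ <;>
        · simp only [hSsucc ω]; linarith
    calc μ (f ⁻¹' _ ∩ E) ≤ μ (X k ⁻¹' (Set.Icc a b)ᶜ) := measure_mono hsub
      _ = π (Set.Icc a b)ᶜ := by rw [← hlaw k, Measure.map_apply (hXm k) measurableSet_Icc.compl]
      _ = 0 := hπcompl
      _ ≤ 0 := le_refl 0
  · -- C ⊆ support
    intro hp U hU
    obtain ⟨u, v⟩ := p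
    obtain ⟨hu, hv, hav, hvb⟩ := hp
    simp only at hu hv hav hvb
    obtain ⟨ε, hε, hballU⟩ := Metric.mem_nhds_iff.mp hU
    intro h0
    have h0' : (Measure.map f (μ.restrict E)) (Metric.ball (u, v) ε) = 0 :=
      measure_mono_null hballU h0
    rw [hmap _ measurableSet_ball] at h0'
    -- auxiliary: a product event forces positive measure
    have aux : ∀ c d r₁ r₂ : ℝ, a ≤ c → c ≤ b → a ≤ d → d ≤ b → 0 < r₁ → 0 < r₂ →
        (∀ s x : ℝ, (k:ℝ)*c - (k:ℝ)*r₁ < s → s < (k:ℝ)*c + (k:ℝ)*r₁ →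
          d - r₂ < x → x < d + r₂ →
          s ≤ (k:ℝ)*b ∧ (k:ℝ)*b < s + x ∧
            ((k:ℝ)*b - s, s + x - (k:ℝ)*b) ∈ Metric.ball ((u:ℝ), v) ε) →
        0 < μ (f ⁻¹' (Metric.ball ((u:ℝ), v) ε) ∩ E) := by
      intro c d r₁ r₂ hca hcb hda hdb hr₁ hr₂ hsub
      set A : ℕ → Set ℝ := fun i =>
        if i = k then Set.Ioo (d - r₂) (d + r₂) else Set.Ioo (c - r₁) (c + r₁) with hAdef
      have hAmeas : ∀ i, MeasurableSet (A i) := by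
        intro i; simp only [hAdef]; split <;> exact measurableSet_Ioo
      have hprod : μ (⋂ i ∈ Finset.range (k+1), X i ⁻¹' A i)
          = ∏ i ∈ Finset.range (k+1), μ (X i ⁻¹' A i) :=
        hiid.meas_biInter (fun i _ => ⟨A i, hAmeas i, rfl⟩)
      have hposG : 0 < μ (⋂ i ∈ Finset.range (k+1), X i ⁻¹' A i) := by
        rw [hprod]
        rw [CanonicallyOrderedAdd.prod_pos]
        intro i _
        have hmapi : μ (X i ⁻¹' A i) = π (A i) := by
          rw [← hlaw i, Measure.map_apply (hXm i) (hAmeas i)]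
        rw [hmapi]
        by_cases hik : i = k
        · simp only [hAdef, hik, if_pos]
          exact hπpos d hda hdb r₂ hr₂
        · simp only [hAdef, if_neg hik]
          exact hπpos c hca hcb r₁ hr₁
      refine lt_of_lt_of_le hposG (measure_mono ?_)
      intro ω hω
      simp only [Set.mem_iInter, Set.mem_preimage] at hω
      have hXk : X k ω ∈ Set.Ioo (d - r₂) (d + r₂) := by
        have := hω k (Finset.mem_range.mpr (Nat.lt_succ_self k))
        simpa [hAdef] using this
      have hXi : ∀ i, i < k → X i ω ∈ Set.Ioo (c - r₁) (c + r₁) := by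
        intro i hi
        have := hω i (Finset.mem_range.mpr (Nat.lt_succ_of_lt hi))
        simpa [hAdef, Nat.ne_of_lt hi] using this
      have h1 : S k ω < (k:ℝ)*c + (k:ℝ)*r₁ := by
        rw [hS k ω]
        calc ∑ i ∈ Finset.range k, X i ω < ∑ _i ∈ Finset.range k, (c + r₁) :=
              Finset.sum_lt_sum_of_nonempty
                (Finset.nonempty_range_iff.mpr (by omega))
                (fun i hi => (hXi i (Finset.mem_range.mp hi)).2)
          _ = (k:ℝ)*c + (k:ℝ)*r₁ := by
              rw [Finset.sum_const, Finset.card_range, nsmul_eq_mul]; ring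
      have h2 : (k:ℝ)*c - (k:ℝ)*r₁ < S k ω := by
        rw [hS k ω]
        calc (k:ℝ)*c - (k:ℝ)*r₁ = ∑ _i ∈ Finset.range k, (c - r₁) := by
              rw [Finset.sum_const, Finset.card_range, nsmul_eq_mul]; ring
          _ < ∑ i ∈ Finset.range k, X i ω :=
              Finset.sum_lt_sum_of_nonempty
                (Finset.nonempty_range_iff.mpr (by omega))
                (fun i hi => (hXi i (Finset.mem_range.mp hi)).1)
      obtain ⟨hE1, hE2, hball⟩ := hsub (S k ω) (X k ω) h2 h1 hXk.1 hXk.2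
      constructor
      · simp only [Set.mem_preimage, hfdef]
        have : S (k+1) ω = S k ω + X k ω := hSsucc ω
        rw [this]
        exact hball
      · exact ⟨hE1, by rw [hSsucc ω]; exact hE2⟩
    -- now the case analysis
    rcases eq_or_lt_of_le hv.1 with hv0 | hv0
    · -- v = 0, hence a ≤ u
      have hua : a ≤ u := by linarith
      set ρ : ℝ := min ε u / 2 with hρdef
      have hρ0 : 0 < ρ := by
        apply half_pos; exact lt_min hε (by linarith)
      have hρε : ρ ≤ ε / 2 := by
        apply div_le_div_of_nonneg_right (min_le_left _ _) (by norm_num)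
      have hρu : ρ ≤ u / 2 := by
        apply div_le_div_of_nonneg_right (min_le_right _ _) (by norm_num)
      have hpos := aux (((k:ℝ)*b - u + 3*ρ/4)/k) u (ρ/(8*k)) (ρ/4)
        (by rw [le_div_iff₀ hk0]; linarith [hkbk, hu.2, hρ0])
        (by rw [div_le_iff₀ hk0]; linarith [hρu, hρ0])
        hua hu.2 (by positivity) (by positivity)
        ?_
      · exact absurd h0' (ne_of_gt hpos)
      · intro s x hs1 hs2 hx1 hx2
        have hkc : (k:ℝ) * (((k:ℝ)*b - u + 3*ρ/4)/k) = (k:ℝ)*b - u + 3*ρ/4 := by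
          field_simp
        have hkr : (k:ℝ) * (ρ/(8*k)) = ρ/8 := by field_simp
        rw [hkc, hkr] at hs1 hs2
        refine ⟨by linarith, by linarith, ?_⟩
        rw [Metric.mem_ball, Prod.dist_eq]
        simp only [Real.dist_eq]
        rw [max_lt_iff]
        constructor <;> (rw [abs_lt]; constructor) <;> linarith
    · -- v > 0, hence u < b
      have hub : u < b := by linarith
      set ρ : ℝ := min ε (min v (b - u)) / 2 with hρdef
      have hρ0 : 0 < ρ := by
        apply half_pos
        exact lt_min hε (lt_min hv0 (by linarith))
      have hρε : ρ ≤ ε / 2 :=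
        div_le_div_of_nonneg_right (min_le_left _ _) (by norm_num)
      have hρv : ρ ≤ v / 2 :=
        div_le_div_of_nonneg_right (le_trans (min_le_right _ _) (min_le_left _ _)) (by norm_num)
      have hρbu : ρ ≤ (b - u) / 2 :=
        div_le_div_of_nonneg_right (le_trans (min_le_right _ _) (min_le_right _ _)) (by norm_num)
      have hpos := aux (((k:ℝ)*b - u - 3*ρ/4)/k) (u + v) (ρ/(8*k)) (ρ/4)
        (by rw [le_div_iff₀ hk0]; linarith [hkbk, hρbu, hρ0])
        (by rw [div_le_iff₀ hk0]; linarith [hu.1, hρ0])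
        hav hvb (by positivity) (by positivity)
        ?_
      · exact absurd h0' (ne_of_gt hpos)
      · intro s x hs1 hs2 hx1 hx2
        have hkc : (k:ℝ) * (((k:ℝ)*b - u - 3*ρ/4)/k) = (k:ℝ)*b - u - 3*ρ/4 := by
          field_simp
        have hkr : (k:ℝ) * (ρ/(8*k)) = ρ/8 := by field_simp
        rw [hkc, hkr] at hs1 hs2
        refine ⟨by linarith [hu.1], by linarith, ?_⟩
        rw [Metric.mem_ball, Prod.dist_eq]
        simp only [Real.dist_eq]
        rw [max_lt_iff]
        constructor <;> (rw [abs_lt]; constructor) <;> linarith
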